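/- Let $(X,\rho)$ be a compact metric space with fully supported non-singular Borel probability measure $\lambda$ that is limsup full for a measurable map $T\colon X\to X$. Then for every $\delta<\operatorname{diam}(X)/2$, the set of $\delta$-Li-Yorke pairs $LY_2^\delta=\{(x,y): \liminf_n\rho(T^nx,T^ny)=0 \text{ and } \limsup_n\rho(T^nx,T^ny)>\delta\}$ has full $\lambda\times\lambda$ measure in $X\times X$. -/

import Mathlib

open MeasureTheory Filter ENNReal

/-- Uniform lower bound on the measure of balls of a fixed radius, on a compact
space with a fully supported measure. -/
lemma aux_ball_unif {X : Type*} [MetricSpace X] [CompactSpace X]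
    [MeasurableSpace X] [BorelSpace X] [Nonempty X]
    (lam : Measure X)
    (hsupp : ∀ U : Set X, IsOpen U → U.Nonempty → 0 < lam U)
    {ε : ℝ} (hε : 0 < ε) :
    ∃ c : ℝ≥0∞, 0 < c ∧ ∀ x : X, c ≤ lam (Metric.ball x ε) := by
  obtain ⟨t, ht⟩ := isCompact_univ.elim_finite_subcover
    (fun x : X => Metric.ball x (ε / 2)) (fun x => Metric.isOpen_ball)
    (by
      intro x _
      exact Set.mem_iUnion.2 ⟨x, Metric.mem_ball_self (by linarith)⟩)
  obtain ⟨x₀⟩ := ‹Nonempty X›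
  have hx₀ := ht (Set.mem_univ x₀)
  simp only [Set.mem_iUnion] at hx₀
  obtain ⟨i₀, hi₀t, _⟩ := hx₀
  have htne : t.Nonempty := ⟨i₀, hi₀t⟩
  refine ⟨t.inf' htne (fun i => lam (Metric.ball i (ε / 2))), ?_, ?_⟩
  · rw [Finset.lt_inf'_iff]
    intro i _
    exact hsupp _ Metric.isOpen_ball ⟨i, Metric.mem_ball_self (by linarith)⟩
  · intro x
    have hx := ht (Set.mem_univ x)
    simp only [Set.mem_iUnion] at hx
    obtain ⟨i, hit, hxi⟩ := hx
    have hsub : Metric.ball i (ε / 2) ⊆ Metric.ball x ε := by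
      intro y hy
      rw [Metric.mem_ball] at hxi hy ⊢
      have := dist_triangle y i x
      rw [dist_comm x i] at hxi
      linarith
    exact le_trans (Finset.inf'_le _ hit) (measure_mono hsub)

/-- If all sufficiently late images of `A` are disjoint from sets of measure at
least `c > 0`, then `A` is null, for a limsup-full measure. -/
lemma aux_tail_null {X : Type*} [MetricSpace X] [CompactSpace X]
    [MeasurableSpace X] [BorelSpace X]
    (T : X → X) (lam : Measure X) [IsProbabilityMeasure lam]
    (hlimsupfull : ∀ A : Set X, MeasurableSet A → 0 < lam A →
      limsup (fun n => lam (T^[n] '' A)) atTop = 1)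
    (A : Set X) (hA : MeasurableSet A) (N : ℕ)
    (c : ℝ≥0∞) (hc : 0 < c)
    (B : ℕ → Set X) (hB : ∀ n, MeasurableSet (B n))
    (hBc : ∀ n, N ≤ n → c ≤ lam (B n))
    (hdisj : ∀ n, N ≤ n → Disjoint (T^[n] '' A) (B n)) :
    lam A = 0 := by
  by_contra h
  have hpos : 0 < lam A := pos_iff_ne_zero.mpr h
  have hfull := hlimsupfull A hA hpos
  have hle : ∀ n, N ≤ n → lam (T^[n] '' A) ≤ 1 - c := by
    intro n hn
    have h1 : T^[n] '' A ⊆ (B n)ᶜ := (hdisj n hn).subset_compl_right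
    calc lam (T^[n] '' A) ≤ lam ((B n)ᶜ) := measure_mono h1
      _ = 1 - lam (B n) := prob_compl_eq_one_sub (hB n)
      _ ≤ 1 - c := tsub_le_tsub_left (hBc n hn) 1
  have hlimsup_le : limsup (fun n => lam (T^[n] '' A)) atTop ≤ 1 - c := by
    apply limsup_le_of_le
    · exact isCobounded_le_of_bot
    · exact eventually_atTop.2 ⟨N, hle⟩
  rw [hfull] at hlimsup_le
  have : (1 : ℝ≥0∞) - c < 1 := ENNReal.sub_lt_self one_ne_top one_ne_zero hc.ne'
  exact absurd (lt_of_le_of_lt hlimsup_le this) (lt_irrefl _)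

theorem stmt5 {X : Type*} [MetricSpace X] [CompactSpace X]
    [MeasurableSpace X] [BorelSpace X]
    (T : X → X) (hT : Measurable T)
    (lam : Measure X) [IsProbabilityMeasure lam]
    (hsupp : ∀ U : Set X, IsOpen U → U.Nonempty → 0 < lam U)
    (hns : ∀ A : Set X, MeasurableSet A → lam (T ⁻¹' A) = 0 → lam A = 0)
    (hlimsupfull : ∀ A : Set X, MeasurableSet A → 0 < lam A →
      limsup (fun n => lam (T^[n] '' A)) atTop = 1)
    (δ : ℝ) (hδ : δ < Metric.diam (Set.univ : Set X) / 2) :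
    (lam.prod lam) {p : X × X |
      liminf (fun n => dist (T^[n] p.1) (T^[n] p.2)) atTop = 0 ∧
      δ < limsup (fun n => dist (T^[n] p.1) (T^[n] p.2)) atTop} = 1 := by
  classical
  -- X is nonempty
  have hXne : Nonempty X := by
    by_contra h
    have : (Set.univ : Set X) = ∅ := Set.univ_eq_empty_iff.2 (not_nonempty_iff.mp h)
    have h1 : lam (Set.univ : Set X) = 1 := measure_univ
    rw [this, measure_empty] at h1
    exact zero_ne_one h1
  set μ := lam.prod lam with hμ
  -- distance functions are measurable and uniformly bounded
  have hdistmeas : ∀ n : ℕ, Measurable (fun p : X × X => dist (T^[n] p.1) (T^[n] p.2)) :=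
    fun n => ((hT.iterate n).comp measurable_fst).dist ((hT.iterate n).comp measurable_snd)
  have hbd : ∀ (x y : X), dist x y ≤ Metric.diam (Set.univ : Set X) :=
    fun x y => Metric.dist_le_diam_of_mem isCompact_univ.isBounded
      (Set.mem_univ x) (Set.mem_univ y)
  -- two points at distance > 2δ
  obtain ⟨u, v, huv⟩ : ∃ u v : X, 2 * δ < dist u v := by
    by_contra h
    push_neg at h
    rcases lt_or_ge δ 0 with hneg | hpos
    · obtain ⟨x₀⟩ := hXne
      have := h x₀ x₀
      rw [dist_self] at this
      linarith
    · have : Metric.diam (Set.univ : Set X) ≤ 2 * δ :=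
        Metric.diam_le_of_forall_dist_le (by linarith) (fun x _ y _ => h x y)
      linarith
  set D := dist u v with hD
  set ε : ℝ := (D - 2 * δ) / 5 with hε
  have hεpos : 0 < ε := by
    rw [hε]; linarith
  -- the bad sets
  -- Bad set 1: non-proximal pairs
  set E : ℕ → ℕ → Set (X × X) := fun k N =>
    {p : X × X | ∀ n, N ≤ n → 1 / ((k : ℝ) + 1) ≤ dist (T^[n] p.1) (T^[n] p.2)} with hE
  have hEmeas : ∀ k N, MeasurableSet (E k N) := by
    intro k N
    have : E k N = ⋂ n, ⋂ (_ : N ≤ n),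
        {p : X × X | 1 / ((k : ℝ) + 1) ≤ dist (T^[n] p.1) (T^[n] p.2)} := by
      ext p; simp [hE]
    rw [this]
    exact MeasurableSet.iInter fun n => MeasurableSet.iInter fun _ =>
      measurableSet_le measurable_const (hdistmeas n)
  -- Bad set 2: pairs which stay within δ + ε eventually
  set F : ℕ → Set (X × X) := fun N =>
    {p : X × X | ∀ n, N ≤ n → dist (T^[n] p.1) (T^[n] p.2) ≤ δ + ε} with hF
  have hFmeas : ∀ N, MeasurableSet (F N) := by
    intro N
    have : F N = ⋂ n, ⋂ (_ : N ≤ n),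
        {p : X × X | dist (T^[n] p.1) (T^[n] p.2) ≤ δ + ε} := by
      ext p; simp [hF]
    rw [this]
    exact MeasurableSet.iInter fun n => MeasurableSet.iInter fun _ =>
      measurableSet_le (hdistmeas n) measurable_const
  -- E k N is null
  have hEnull : ∀ k N, μ (E k N) = 0 := by
    intro k N
    have hkpos : (0 : ℝ) < 1 / ((k : ℝ) + 1) := by positivity
    obtain ⟨c, hcpos, hcball⟩ := aux_ball_unif lam hsupp hkpos
    rw [hμ, MeasureTheory.Measure.measure_prod_null (hEmeas k N)]
    refine ae_of_all _ fun x => ?_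
    refine aux_tail_null T lam hlimsupfull _ ((hEmeas k N).preimage measurable_prodMk_left)
      N c hcpos (fun n => Metric.ball (T^[n] x) (1 / ((k : ℝ) + 1)))
      (fun n => measurableSet_ball) (fun n _ => hcball _) ?_
    intro n hn
    rw [Set.disjoint_left]
    rintro z ⟨y, hy, rfl⟩ hz
    have h1 : 1 / ((k : ℝ) + 1) ≤ dist (T^[n] x) (T^[n] y) := hy n hn
    rw [Metric.mem_ball, dist_comm] at hz
    linarith
  -- F N is null
  have hFnull : ∀ N, μ (F N) = 0 := by
    intro N
    obtain ⟨c, hcpos, hcball⟩ := aux_ball_unif lam hsupp hεpos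
    rw [hμ, MeasureTheory.Measure.measure_prod_null (hFmeas N)]
    refine ae_of_all _ fun x => ?_
    refine aux_tail_null T lam hlimsupfull _ ((hFmeas N).preimage measurable_prodMk_left)
      N c hcpos
      (fun n => if δ + 2 * ε < dist (T^[n] x) u then Metric.ball u ε else Metric.ball v ε)
      (fun n => by split_ifs <;> exact measurableSet_ball)
      (fun n _ => by split_ifs <;> exact hcball _) ?_
    intro n hn
    rw [Set.disjoint_left]
    rintro z ⟨y, hy, rfl⟩ hz
    have h1 : dist (T^[n] x) (T^[n] y) ≤ δ + ε := hy n hn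
    split_ifs at hz with hcase
    · rw [Metric.mem_ball] at hz
      have := dist_triangle (T^[n] x) (T^[n] y) u
      linarith
    · push_neg at hcase
      rw [Metric.mem_ball] at hz
      have h2 : D ≤ dist u (T^[n] x) + dist (T^[n] x) v := dist_triangle u (T^[n] x) v
      have h3 : dist (T^[n] x) v ≤ dist (T^[n] x) (T^[n] y) + dist (T^[n] y) v :=
        dist_triangle _ _ _
      rw [dist_comm u (T^[n] x)] at h2
      have hεD : D = 2 * δ + 5 * ε := by rw [hε]; ring
      linarith
  -- boundedness facts for liminf/limsup
  have hbdd_above : ∀ p : X × X,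
      IsBoundedUnder (· ≤ ·) atTop (fun n => dist (T^[n] p.1) (T^[n] p.2)) :=
    fun p => isBoundedUnder_of ⟨Metric.diam (Set.univ : Set X), fun n => hbd _ _⟩
  have hbdd_below : ∀ p : X × X,
      IsBoundedUnder (· ≥ ·) atTop (fun n => dist (T^[n] p.1) (T^[n] p.2)) :=
    fun p => isBoundedUnder_of ⟨0, fun n => dist_nonneg⟩
  -- the complement of the target set is contained in the union of bad sets
  set S := {p : X × X |
      liminf (fun n => dist (T^[n] p.1) (T^[n] p.2)) atTop = 0 ∧
      δ < limsup (fun n => dist (T^[n] p.1) (T^[n] p.2)) atTop} with hS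
  have hcompl : Sᶜ ⊆ (⋃ k, ⋃ N, E k N) ∪ (⋃ N, F N) := by
    intro p hp
    rw [Set.mem_compl_iff, hS, Set.mem_setOf_eq, not_and_or] at hp
    rcases hp with hp | hp
    · left
      -- liminf ≠ 0, so liminf > 0
      have h0 : 0 ≤ liminf (fun n => dist (T^[n] p.1) (T^[n] p.2)) atTop :=
        le_liminf_of_le ((hbdd_above p).isCoboundedUnder_ge)
          (Eventually.of_forall fun n => dist_nonneg)
      have hlt : 0 < liminf (fun n => dist (T^[n] p.1) (T^[n] p.2)) atTop :=
        lt_of_le_of_ne h0 (Ne.symm hp)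
      obtain ⟨k, hk⟩ := exists_nat_one_div_lt hlt
      have hev := eventually_lt_of_lt_liminf hk (hbdd_below p)
      rw [eventually_atTop] at hev
      obtain ⟨N, hN⟩ := hev
      refine Set.mem_iUnion.2 ⟨k, Set.mem_iUnion.2 ⟨N, ?_⟩⟩
      exact fun n hn => le_of_lt (hN n hn)
    · right
      rw [not_lt] at hp
      have hlt : limsup (fun n => dist (T^[n] p.1) (T^[n] p.2)) atTop < δ + ε :=
        lt_of_le_of_lt hp (by linarith)
      have hev := eventually_lt_of_limsup_lt hlt (hbdd_above p)
      rw [eventually_atTop] at hev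
      obtain ⟨N, hN⟩ := hev
      refine Set.mem_iUnion.2 ⟨N, ?_⟩
      exact fun n hn => le_of_lt (hN n hn)
  have hcomplnull : μ Sᶜ = 0 := by
    refine measure_mono_null hcompl (measure_union_null ?_ ?_)
    · exact measure_iUnion_null fun k => measure_iUnion_null fun N => hEnull k N
    · exact measure_iUnion_null fun N => hFnull N
  -- conclude
  have h1 : (1 : ℝ≥0∞) ≤ μ S := by
    have := measure_union_le (μ := μ) S Sᶜ
    rw [Set.union_compl_self, measure_univ, hcomplnull, add_zero] at this
    exact this
  exact le_antisymm prob_le_one h1
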